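/- Let a ≥ 4 be an even integer, d > 0 with gcd(a,d) = 1, and p = a/2 − 1. Then the p-numerical semigroup S_p(a, a+d, a+2d) is p-symmetric, i.e., n_p = (g_p + ℓ_0(p) + 1)/2 where g_p(a,a+d,a+2d) = (a+2d)p + ((a−2)/2)a + (a−1)d, n_p = (2a+2d−1−p)p + ((a−1)(a+2d−1)+1)/4, and ℓ_0(p) = 2p(a+d). -/

import Mathlib

/-- number of representations of `n` by the arithmetic triple `a, a+d, a+2d`. -/
noncomputable def numRep3 (a d n : ℕ) : ℕ :=
  Set.ncard {x : ℕ × ℕ × ℕ | a * x.1 + (a + d) * x.2.1 + (a + 2 * d) * x.2.2 = n}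

def Sp3 (p a d : ℕ) : Set ℕ := {n : ℕ | p < numRep3 a d n}

namespace Stmt19

def sol (a d n : ℕ) : Set (ℕ × ℕ × ℕ) :=
  {x : ℕ × ℕ × ℕ | a * x.1 + (a + d) * x.2.1 + (a + 2 * d) * x.2.2 = n}

lemma numRep3_eq (a d n : ℕ) : numRep3 a d n = (sol a d n).ncard := rfl

/-- the threshold function: the minimal element of `S_p` in the residue class `d*s mod a`. -/
def TT (a d s : ℕ) : ℕ := a * (a - 2 + s % 2) + d * (if s < a - 2 then s + a else s)

lemma sol_finite (a d n : ℕ) (ha : 0 < a) : (sol a d n).Finite := by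
  apply Set.Finite.subset (Set.finite_Icc ((0,0,0) : ℕ×ℕ×ℕ) (n,n,n))
  rintro ⟨x,y,z⟩ h
  simp only [sol, Set.mem_setOf_eq] at h
  refine ⟨⟨Nat.zero_le _, Nat.zero_le _, Nat.zero_le _⟩, ?_, ?_, ?_⟩ <;>
    · simp only []; nlinarith

lemma param (a d A B x y z : ℕ) (ha : 0 < a) (hgcd : Nat.gcd a d = 1)
    (h : a * x + (a + d) * y + (a + 2 * d) * z = a * A + d * B) :
    ∃ k : ℤ, (y : ℤ) + 2 * z = B + a * k ∧ (x : ℤ) + y + z = A - d * k := by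
  have hz : (a : ℤ) * x + (a + d) * y + (a + 2 * d) * z = a * A + d * B := by
    exact_mod_cast h
  have hco : IsCoprime (a : ℤ) (d : ℤ) := by
    rw [Int.isCoprime_iff_gcd_eq_one]; simpa using hgcd
  have hdvd : (a : ℤ) ∣ d * ((y : ℤ) + 2 * z - B) := ⟨(A : ℤ) - x - y - z, by linarith⟩
  obtain ⟨k, hk⟩ := hco.dvd_of_dvd_mul_left hdvd
  refine ⟨k, by linarith, ?_⟩
  have h0 : (a : ℤ) ≠ 0 := by exact_mod_cast ha.ne'
  have key : (a : ℤ) * ((x:ℤ) + y + z) = a * ((A:ℤ) - d * k) := by nlinarith [hk, hz]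
  exact mul_left_cancel₀ h0 key

lemma mono (a d n : ℕ) (ha : 0 < a) : (sol a d n).ncard ≤ (sol a d (n + a)).ncard := by
  have himg : (fun p : ℕ×ℕ×ℕ => (p.1 + 1, p.2.1, p.2.2)) '' sol a d n ⊆ sol a d (n + a) := by
    rintro ⟨x,y,z⟩ ⟨⟨x',y',z'⟩, hp, heq⟩
    simp only [Prod.mk.injEq] at heq
    obtain ⟨h1,h2,h3⟩ := heq
    simp only [sol, Set.mem_setOf_eq] at hp ⊢
    subst h1; subst h2; subst h3; ring_nf; ring_nf at hp; omega
  have hinj : Function.Injective (fun p : ℕ×ℕ×ℕ => (p.1 + 1, p.2.1, p.2.2)) := by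
    rintro ⟨x,y,z⟩ ⟨x',y',z'⟩ h
    simp only [Prod.mk.injEq] at h
    simp [Prod.ext_iff]; omega
  calc (sol a d n).ncard = ((fun p : ℕ×ℕ×ℕ => (p.1 + 1, p.2.1, p.2.2)) '' sol a d n).ncard :=
        (Set.ncard_image_of_injective _ hinj).symm
    _ ≤ (sol a d (n+a)).ncard := Set.ncard_le_ncard himg (sol_finite a d (n+a) ha)

lemma mono' (a d n j : ℕ) (ha : 0 < a) : (sol a d n).ncard ≤ (sol a d (n + j * a)).ncard := by
  induction j with
  | zero => simp
  | succ j ih => calc (sol a d n).ncard ≤ (sol a d (n + j*a)).ncard := ih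
      _ ≤ (sol a d (n + j*a + a)).ncard := mono a d _ ha
      _ = (sol a d (n + (j+1)*a)).ncard := by ring_nf

lemma lower (a d s : ℕ) (ha : 4 ≤ a) (hae : 2 ∣ a) (hd : 0 < d) (hs : s < a) :
    a / 2 ≤ (sol a d (TT a d s)).ncard := by
  set m := a / 2 with hm
  have ham : a = 2 * m := by omega
  set q := s / 2 with hq
  set e := s % 2 with he
  have hse : s = 2 * q + e := by omega
  have he2 : e < 2 := by omega
  by_cases hcase : s < a - 2
  · have hqm : q + 1 ≤ m - 1 := by omega
    set F : Finset (ℕ×ℕ×ℕ) :=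
      (Finset.range (q+1)).image (fun z => (a - 2 + d + z - 2*q, s - 2*z, z)) ∪
      (Finset.range (m-1-q)).image (fun j => (j, s + a - 2*(2*q+2+j), 2*q+2+j)) with hF
    have hTT : TT a d s = a * (a - 2 + e) + d * (s + a) := by
      rw [TT, if_pos hcase]
    have hsub : (F : Set (ℕ×ℕ×ℕ)) ⊆ sol a d (TT a d s) := by
      intro p hp
      simp only [hF, Finset.coe_union, Set.mem_union, Finset.coe_image, Set.mem_image,
        Finset.mem_coe, Finset.mem_range] at hp
      rcases hp with ⟨z, hz, rfl⟩ | ⟨j, hj, rfl⟩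
      · simp only [sol, Set.mem_setOf_eq, hTT]
        have h1 : 2*q ≤ a - 2 + d + z := by omega
        have h2 : 2*z ≤ s := by omega
        have h3 : 2 ≤ a := by omega
        zify [h1, h2, h3]
        have : (s:ℤ) = 2*q + e := by exact_mod_cast hse
        linear_combination (a:ℤ) * this
      · simp only [sol, Set.mem_setOf_eq, hTT]
        have h1 : 2*(2*q+2+j) ≤ s + a := by omega
        have h3 : 2 ≤ a := by omega
        zify [h1, h3]
        have : (s:ℤ) = 2*q + e := by exact_mod_cast hse
        linear_combination (a:ℤ) * this
    have hcard : m ≤ F.card := by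
      rw [hF, Finset.card_union_of_disjoint, Finset.card_image_of_injOn,
        Finset.card_image_of_injOn]
      · simp only [Finset.card_range]; omega
      · intro u _ v _ h; simpa using congrArg Prod.fst h
      · intro u _ v _ h; have := congrArg (fun p : ℕ×ℕ×ℕ => p.2.2) h; simp at this; omega
      · rw [Finset.disjoint_left]
        rintro p hp1 hp2
        simp only [Finset.mem_image, Finset.mem_range] at hp1 hp2
        obtain ⟨z, hz, rfl⟩ := hp1
        obtain ⟨j, hj, hjeq⟩ := hp2
        have := congrArg (fun p : ℕ×ℕ×ℕ => p.2.2) hjeq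
        simp at this; omega
    calc m ≤ F.card := hcard
      _ = (F : Set (ℕ×ℕ×ℕ)).ncard := (Set.ncard_coe_finset F).symm
      _ ≤ (sol a d (TT a d s)).ncard := Set.ncard_le_ncard hsub (sol_finite a d _ (by omega))
  · have hs2 : s = a - 2 + e := by omega
    have hTT : TT a d s = a * s + d * s := by
      rw [TT, if_neg hcase]; congr 1; · congr 1; omega
    set F : Finset (ℕ×ℕ×ℕ) := (Finset.range m).image (fun z => (z, s - 2*z, z)) with hF
    have hsub : (F : Set (ℕ×ℕ×ℕ)) ⊆ sol a d (TT a d s) := by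
      intro p hp
      simp only [hF, Finset.coe_image, Set.mem_image, Finset.mem_coe, Finset.mem_range] at hp
      obtain ⟨z, hz, rfl⟩ := hp
      simp only [sol, Set.mem_setOf_eq, hTT]
      have h2 : 2*z ≤ s := by omega
      zify [h2]
      ring
    have hcard : m ≤ F.card := by
      rw [hF, Finset.card_image_of_injOn]
      · simp
      · intro u _ v _ h; simpa using congrArg Prod.fst h
    calc m ≤ F.card := hcard
      _ = (F : Set (ℕ×ℕ×ℕ)).ncard := (Set.ncard_coe_finset F).symm
      _ ≤ (sol a d (TT a d s)).ncard := Set.ncard_le_ncard hsub (sol_finite a d _ (by omega))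

lemma upper (a d s : ℕ) (ha : 4 ≤ a) (hae : 2 ∣ a) (hd : 0 < d)
    (hgcd : Nat.gcd a d = 1) (hs : s < a) :
    (sol a d (TT a d s - a)).ncard ≤ a / 2 - 1 := by
  set m := a / 2 with hm
  have ham : a = 2 * m := by omega
  set q := s / 2 with hq
  set e := s % 2 with he
  have hse : s = 2 * q + e := by omega
  have he2 : e < 2 := by omega
  by_cases hcase : s < a - 2
  · have hqm : q ≤ m - 2 := by omega
    have hTT : TT a d s - a = a * (a - 3 + e) + d * (s + a) := by
      rw [TT, if_pos hcase]
      have h5 : a - 2 + s % 2 = (a - 3 + e) + 1 := by omega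
      rw [h5, Nat.mul_succ]; omega
    set G : Finset (ℕ×ℕ×ℕ) :=
      (Finset.range (q+1)).image (fun z => (a - 3 + d + z - 2*q, s - 2*z, z)) ∪
      (Finset.range (m-2-q)).image (fun j => (j, s + a - 2*(2*q+3+j), 2*q+3+j)) with hG
    have hsub : sol a d (TT a d s - a) ⊆ (G : Set (ℕ×ℕ×ℕ)) := by
      rintro ⟨x,y,z⟩ hxyz
      simp only [sol, Set.mem_setOf_eq, hTT] at hxyz
      obtain ⟨k, hk1, hk2⟩ := param a d (a-3+e) (s+a) x y z (by omega) hgcd hxyz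
      have hknot1 : ¬ k ≤ -2 := by
        intro hkle
        have h1 : (a:ℤ) * k ≤ (a:ℤ) * (-2) :=
          mul_le_mul_of_nonneg_left (by exact_mod_cast hkle) (by positivity)
        have hsa : (s:ℤ) < a := by exact_mod_cast hs
        have hy : (0:ℤ) ≤ y := Int.natCast_nonneg y
        have hz0 : (0:ℤ) ≤ z := Int.natCast_nonneg z
        have hBc : ((s+a : ℕ):ℤ) = s + a := by push_cast; ring
        rw [hBc] at hk1
        linarith
      have hknot2 : ¬ 1 ≤ k := by
        intro hkge
        have h1 : (a:ℤ) * 1 ≤ (a:ℤ) * k :=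
          mul_le_mul_of_nonneg_left (by exact_mod_cast hkge) (by positivity)
        have h2 : (d:ℤ) * 1 ≤ (d:ℤ) * k :=
          mul_le_mul_of_nonneg_left (by exact_mod_cast hkge) (by positivity)
        have hBc : ((s+a : ℕ):ℤ) = s + a := by push_cast; ring
        have hAc : ((a-3+e : ℕ):ℤ) = (a:ℤ) - 3 + e := by
          have : (3:ℕ) ≤ a := by omega
          push_cast [this]; ring
        rw [hBc] at hk1; rw [hAc] at hk2
        have hx : (0:ℤ) ≤ x := Int.natCast_nonneg x
        have hy : (0:ℤ) ≤ y := Int.natCast_nonneg y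
        have hz0 : (0:ℤ) ≤ z := Int.natCast_nonneg z
        have hec : (e:ℤ) ≤ 1 := by exact_mod_cast Nat.lt_succ_iff.mp he2
        have hdc : (1:ℤ) ≤ d := by exact_mod_cast hd
        have hsc : (0:ℤ) ≤ s := Int.natCast_nonneg s
        linarith
      have hk01 : k = -1 ∨ k = 0 := by omega
      simp only [hG, Finset.coe_union, Set.mem_union, Finset.coe_image, Set.mem_image,
        Finset.mem_coe, Finset.mem_range]
      rcases hk01 with rfl | rfl
      · left
        have hn1 : y + 2*z = s := by
          have : (y:ℤ) + 2*z = ((s+a:ℕ):ℤ) + a * (-1) := hk1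
          omega
        have hn2 : x + y + z = a - 3 + e + d := by
          have : (x:ℤ) + y + z = ((a-3+e:ℕ):ℤ) - d * (-1) := hk2
          omega
        refine ⟨z, by omega, ?_⟩
        simp only [Prod.mk.injEq]
        refine ⟨by omega, by omega, trivial⟩
      · right
        have hn1 : y + 2*z = s + a := by
          have : (y:ℤ) + 2*z = ((s+a:ℕ):ℤ) + a * 0 := hk1
          omega
        have hn2 : x + y + z = a - 3 + e := by
          have : (x:ℤ) + y + z = ((a-3+e:ℕ):ℤ) - d * 0 := hk2
          omega
        refine ⟨z - (2*q+3), by omega, ?_⟩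
        simp only [Prod.mk.injEq]
        refine ⟨by omega, by omega, by omega⟩
    have hcard : G.card ≤ m - 1 := by
      calc G.card ≤ _ + _ := Finset.card_union_le _ _
        _ ≤ (q+1) + (m-2-q) := by
            gcongr <;> exact (Finset.card_image_le).trans (by simp)
        _ ≤ m - 1 := by omega
    calc (sol a d (TT a d s - a)).ncard ≤ (G : Set (ℕ×ℕ×ℕ)).ncard :=
          Set.ncard_le_ncard hsub G.finite_toSet
      _ = G.card := Set.ncard_coe_finset G
      _ ≤ m - 1 := hcard
  · have hs2 : s = a - 2 + e := by omega
    have hTTv : TT a d s = a * s + d * s := by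
      rw [TT, if_neg hcase]; congr 2; omega
    have hTT : TT a d s - a = a * (s-1) + d * s := by
      rw [hTTv]
      have h5 : s = (s - 1) + 1 := by omega
      nth_rewrite 1 [h5]
      rw [Nat.mul_succ]; omega
    set G : Finset (ℕ×ℕ×ℕ) :=
      (Finset.range (m-1)).image (fun j => (j, s - 2*(j+1), j+1)) with hG
    have hsub : sol a d (TT a d s - a) ⊆ (G : Set (ℕ×ℕ×ℕ)) := by
      rintro ⟨x,y,z⟩ hxyz
      simp only [sol, Set.mem_setOf_eq, hTT] at hxyz
      obtain ⟨k, hk1, hk2⟩ := param a d (s-1) s x y z (by omega) hgcd hxyz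
      have hknot1 : ¬ k ≤ -1 := by
        intro hkle
        have h1 : (a:ℤ) * k ≤ (a:ℤ) * (-1) :=
          mul_le_mul_of_nonneg_left (by exact_mod_cast hkle) (by positivity)
        have hsa : (s:ℤ) < a := by exact_mod_cast hs
        have hy : (0:ℤ) ≤ y := Int.natCast_nonneg y
        have hz0 : (0:ℤ) ≤ z := Int.natCast_nonneg z
        linarith
      have hknot2 : ¬ 1 ≤ k := by
        intro hkge
        have h1 : (a:ℤ) * 1 ≤ (a:ℤ) * k :=
          mul_le_mul_of_nonneg_left (by exact_mod_cast hkge) (by positivity)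
        have h2 : (d:ℤ) * 1 ≤ (d:ℤ) * k :=
          mul_le_mul_of_nonneg_left (by exact_mod_cast hkge) (by positivity)
        have hAc : ((s-1 : ℕ):ℤ) = (s:ℤ) - 1 := by
          have : (1:ℕ) ≤ s := by omega
          push_cast [this]; ring
        rw [hAc] at hk2
        have hx : (0:ℤ) ≤ x := Int.natCast_nonneg x
        have hy : (0:ℤ) ≤ y := Int.natCast_nonneg y
        have hz0 : (0:ℤ) ≤ z := Int.natCast_nonneg z
        have hdc : (1:ℤ) ≤ d := by exact_mod_cast hd
        have hsa : (s:ℤ) < a := by exact_mod_cast hs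
        linarith
      have hk0 : k = 0 := by omega
      subst hk0
      have hn1 : y + 2*z = s := by
        have : (y:ℤ) + 2*z = (s:ℤ) + a * 0 := hk1
        omega
      have hn2 : x + y + z = s - 1 := by
        have : (x:ℤ) + y + z = ((s-1:ℕ):ℤ) - d * 0 := hk2
        omega
      simp only [hG, Finset.coe_image, Set.mem_image, Finset.mem_coe, Finset.mem_range]
      refine ⟨z - 1, by omega, ?_⟩
      simp only [Prod.mk.injEq]
      refine ⟨by omega, by omega, by omega⟩
    have hcard : G.card ≤ m - 1 := (Finset.card_image_le).trans (by simp)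
    calc (sol a d (TT a d s - a)).ncard ≤ (G : Set (ℕ×ℕ×ℕ)).ncard :=
          Set.ncard_le_ncard hsub G.finite_toSet
      _ = G.card := Set.ncard_coe_finset G
      _ ≤ m - 1 := hcard

lemma TT_mod (a d s : ℕ) : TT a d s ≡ d * s [MOD a] := by
  rw [TT]
  by_cases hcase : s < a - 2
  · rw [if_pos hcase]
    calc a * (a - 2 + s % 2) + d * (s + a) ≡ 0 + d * (s + a) [MOD a] :=
          Nat.ModEq.add_right _ ((Nat.modEq_zero_iff_dvd).mpr ⟨_, rfl⟩)
      _ = d * s + d * a := by ring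
      _ ≡ d * s + 0 [MOD a] := Nat.ModEq.add_left _ ((Nat.modEq_zero_iff_dvd).mpr ⟨d, mul_comm d a⟩)
      _ = d * s := by ring
  · rw [if_neg hcase]
    calc a * (a - 2 + s % 2) + d * s ≡ 0 + d * s [MOD a] :=
          Nat.ModEq.add_right _ ((Nat.modEq_zero_iff_dvd).mpr ⟨_, rfl⟩)
      _ = d * s := by ring

lemma class_ex (a d n : ℕ) (ha : 0 < a) (hgcd : Nat.gcd a d = 1) :
    ∃ s, s < a ∧ n ≡ d * s [MOD a] := by
  haveI : NeZero a := ⟨by omega⟩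
  have hu : IsUnit (d : ZMod a) := by
    rw [ZMod.isUnit_iff_coprime]
    exact Nat.coprime_comm.mp hgcd
  refine ⟨((d : ZMod a)⁻¹ * (n : ZMod a)).val, ZMod.val_lt _, ?_⟩
  rw [← ZMod.natCast_eq_natCast_iff]
  push_cast
  rw [ZMod.natCast_val, ZMod.cast_id]
  rw [← mul_assoc, ZMod.mul_inv_of_unit _ hu, one_mul]

lemma TT_ge (a d s : ℕ) (ha : 4 ≤ a) : a ≤ TT a d s := by
  rw [TT]
  have : a * 2 ≤ a * (a - 2 + s % 2) := Nat.mul_le_mul_left a (by omega)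
  omega

/-- the key characterization: `n ∈ S_p` iff `n` is at least the threshold of its class. -/
lemma charac (a d s n : ℕ) (ha : 4 ≤ a) (hae : 2 ∣ a) (hd : 0 < d)
    (hgcd : Nat.gcd a d = 1) (hs : s < a) (hmod : n ≡ d * s [MOD a]) :
    (a / 2 - 1 < numRep3 a d n) ↔ TT a d s ≤ n := by
  have hmod2 : n ≡ TT a d s [MOD a] := hmod.trans (TT_mod a d s).symm
  constructor
  · intro hmem
    by_contra hlt
    push_neg at hlt
    have hdvd : a ∣ TT a d s - n := (Nat.modEq_iff_dvd' hlt.le).mp hmod2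
    obtain ⟨c, hc⟩ := hdvd
    have hc1 : 1 ≤ c := by
      rcases Nat.eq_zero_or_pos c with h0 | h1
      · rw [h0, Nat.mul_zero] at hc; omega
      · exact h1
    have hceq : c = (c - 1) + 1 := by omega
    rw [hceq, Nat.mul_succ] at hc
    have hTn : TT a d s - a = n + (c-1) * a := by
      have h1 : a ≤ TT a d s := TT_ge a d s ha
      have h2 : a * (c-1) = (c-1) * a := mul_comm _ _
      generalize hP : (c-1) * a = P at *
      omega
    have : numRep3 a d n ≤ a / 2 - 1 := by
      rw [numRep3_eq]
      calc (sol a d n).ncard ≤ (sol a d (n + (c-1)*a)).ncard := mono' a d n (c-1) (by omega)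
        _ = (sol a d (TT a d s - a)).ncard := by rw [← hTn]
        _ ≤ a / 2 - 1 := upper a d s ha hae hd hgcd hs
    omega
  · intro hge
    have hdvd : a ∣ n - TT a d s := (Nat.modEq_iff_dvd' hge).mp hmod2.symm
    obtain ⟨c, hc⟩ := hdvd
    have hTn : n = TT a d s + c * a := by
      have h2 : a * c = c * a := mul_comm _ _
      generalize hP : c * a = P at *
      omega
    have : a / 2 ≤ numRep3 a d n := by
      rw [numRep3_eq, hTn]
      calc a / 2 ≤ (sol a d (TT a d s)).ncard := lower a d s ha hae hd hs
        _ ≤ (sol a d (TT a d s + c * a)).ncard := mono' a d _ c (by omega)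
    omega


lemma sum_mod_two (n : ℕ) : ∑ s ∈ Finset.range n, (s % 2) = n / 2 := by
  induction n with
  | zero => simp
  | succ n ih => rw [Finset.sum_range_succ, ih]; omega

lemma sum_if (n c K : ℕ) : ∑ s ∈ Finset.range n, (if s < c then K else 0) = min c n * K := by
  induction n with
  | zero => simp
  | succ n ih =>
    rw [Finset.sum_range_succ, ih]
    by_cases h : n < c
    · rw [if_pos h]
      have h1 : min c n = n := by omega
      have h2 : min c (n+1) = n+1 := by omega
      rw [h1, h2]; ring
    · rw [if_neg h]
      have h1 : min c n = c := by omega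
      have h2 : min c (n+1) = c := by omega
      rw [h1, h2]; omega

lemma residue_sum (a d : ℕ) (ha : 0 < a) (hgcd : Nat.gcd a d = 1) :
    ∑ s ∈ Finset.range a, (d * s % a) = ∑ s ∈ Finset.range a, s := by
  have hinj : ∀ x ∈ Finset.range a, ∀ y ∈ Finset.range a,
      d * x % a = d * y % a → x = y := by
    intro s hs s' hs' h
    rw [Finset.mem_range] at hs hs'
    have h2 : s ≡ s' [MOD a] := Nat.ModEq.cancel_left_of_coprime hgcd h
    have h3 : s % a = s' % a := h2
    rwa [Nat.mod_eq_of_lt hs, Nat.mod_eq_of_lt hs'] at h3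
  have himg : (Finset.range a).image (fun s => d * s % a) = Finset.range a := by
    apply Finset.eq_of_subset_of_card_le
    · intro x hx
      rw [Finset.mem_image] at hx
      obtain ⟨s, _, rfl⟩ := hx
      exact Finset.mem_range.mpr (Nat.mod_lt _ ha)
    · rw [Finset.card_image_of_injOn (fun x hx y hy => hinj x hx y hy)]
  have h4 : ∑ x ∈ (Finset.range a).image (fun s => d * s % a), x
      = ∑ s ∈ Finset.range a, d * s % a := Finset.sum_image hinj
  rw [himg] at h4
  exact h4.symm

lemma TT_decomp (a d s : ℕ) : TT a d s
    = (a*(a-2) + (d*s + (if s < a - 2 then d*a else 0))) + a*(s%2) := by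
  rw [TT]
  by_cases h : s < a - 2
  · rw [if_pos h, if_pos h, Nat.mul_add, Nat.mul_add]
    ring
  · rw [if_neg h, if_neg h, Nat.mul_add]
    ring

lemma TT_sum (a d : ℕ) (ha : 4 ≤ a) :
    ∑ s ∈ Finset.range a, TT a d s
      = a*(a*(a-2)) + (d*(∑ s ∈ Finset.range a, s) + (a-2)*(d*a)) + a*(a/2) := by
  calc ∑ s ∈ Finset.range a, TT a d s
      = ∑ s ∈ Finset.range a, ((a*(a-2) + (d*s + (if s < a - 2 then d*a else 0))) + a*(s%2)) :=
        Finset.sum_congr rfl (fun s _ => TT_decomp a d s)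
    _ = (∑ _s ∈ Finset.range a, a*(a-2))
        + ((∑ s ∈ Finset.range a, d*s) + (∑ s ∈ Finset.range a, (if s < a - 2 then d*a else 0)))
        + (∑ s ∈ Finset.range a, a*(s%2)) := by
        rw [Finset.sum_add_distrib, Finset.sum_add_distrib, Finset.sum_add_distrib]
    _ = a*(a*(a-2)) + (d*(∑ s ∈ Finset.range a, s) + (a-2)*(d*a)) + a*(a/2) := by
        rw [Finset.sum_const, Finset.card_range, smul_eq_mul, ← Finset.mul_sum,
          sum_if, ← Finset.mul_sum, sum_mod_two]
        have hmin : min (a-2) a = a - 2 := by omega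
        rw [hmin]

end Stmt19

namespace Stmt19

lemma TT_min (a d s : ℕ) (ha : 4 ≤ a) (hae : 2 ∣ a) (hs : s < a) :
    (a - 2) * a + (a - 2) * d ≤ TT a d s := by
  rw [TT]
  by_cases hcase : s < a - 2
  · rw [if_pos hcase]
    have h1 : (a-2) * a ≤ a * (a - 2 + s % 2) := by
      rw [mul_comm]; exact Nat.mul_le_mul_left a (by omega)
    have h2 : (a-2) * d ≤ d * (s + a) := by
      rw [mul_comm]; exact Nat.mul_le_mul_left d (by omega)
    omega
  · rw [if_neg hcase]
    have h1 : (a-2) * a ≤ a * (a - 2 + s % 2) := by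
      rw [mul_comm]; exact Nat.mul_le_mul_left a (by omega)
    have h2 : (a-2) * d ≤ d * s := by
      rw [mul_comm]; exact Nat.mul_le_mul_left d (by omega)
    omega

lemma TT_max (a d s : ℕ) (ha : 4 ≤ a) (hae : 2 ∣ a) (hs : s < a) :
    TT a d s ≤ a * (a - 1) + d * (2 * a - 3) := by
  rw [TT]
  by_cases hcase : s < a - 2
  · rw [if_pos hcase]
    have h1 : a * (a - 2 + s % 2) ≤ a * (a - 1) := Nat.mul_le_mul_left a (by omega)
    have h2 : d * (s + a) ≤ d * (2 * a - 3) := Nat.mul_le_mul_left d (by omega)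
    omega
  · rw [if_neg hcase]
    have h1 : a * (a - 2 + s % 2) ≤ a * (a - 1) := Nat.mul_le_mul_left a (by omega)
    have h2 : d * s ≤ d * (2 * a - 3) := Nat.mul_le_mul_left d (by omega)
    omega

end Stmt19

theorem stmt_19 (a d : ℕ) (ha : 4 ≤ a) (hae : 2 ∣ a) (hd : 0 < d)
    (hgcd : Nat.gcd a d = 1) :
    IsLeast (Sp3 (a / 2 - 1) a d) (2 * (a / 2 - 1) * (a + d)) ∧
      ((a + 2 * d) * (a / 2 - 1) + ((a - 2) / 2) * a + (a - 1) * d ∉ Sp3 (a / 2 - 1) a d ∧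
        ∀ n : ℕ, n ∉ Sp3 (a / 2 - 1) a d →
          n ≤ (a + 2 * d) * (a / 2 - 1) + ((a - 2) / 2) * a + (a - 1) * d) ∧
      Set.ncard {n : ℕ | n ∉ Sp3 (a / 2 - 1) a d} =
        (2 * a + 2 * d - 1 - (a / 2 - 1)) * (a / 2 - 1) +
          ((a - 1) * (a + 2 * d - 1) + 1) / 4 ∧
      2 * Set.ncard {n : ℕ | n ∉ Sp3 (a / 2 - 1) a d} =
        ((a + 2 * d) * (a / 2 - 1) + ((a - 2) / 2) * a + (a - 1) * d) +
          2 * (a / 2 - 1) * (a + d) + 1 := by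
  classical
  obtain ⟨m, ham⟩ : ∃ m, a = 2 * m := ⟨a / 2, by omega⟩
  have hm2 : 2 ≤ m := by omega
  have hdodd : d % 2 = 1 := by
    rcases Nat.even_or_odd d with he | ho
    · exfalso
      have h2 : 2 ∣ Nat.gcd a d := Nat.dvd_gcd hae he.two_dvd
      rw [hgcd] at h2; omega
    · exact Nat.odd_iff.mp ho
  obtain ⟨t, hdt⟩ : ∃ t, d = 2 * t + 1 := ⟨d / 2, by omega⟩
  have hp : a / 2 - 1 = m - 1 := by omega
  -- the left endpoint
  have hl0 : 2 * (a / 2 - 1) * (a + d) = Stmt19.TT a d (a - 2) := by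
    rw [Stmt19.TT, if_neg (lt_irrefl _)]
    have h1 : (a - 2) % 2 = 0 := by omega
    have h2 : a - 2 + (a-2) % 2 = a - 2 := by omega
    rw [h2]
    have h3 : 2 * (a / 2 - 1) = a - 2 := by omega
    rw [h3]
    have h4 : 2 ≤ a := by omega
    zify [h4]
    ring
  -- the Frobenius number
  have hfr : (a + 2 * d) * (a / 2 - 1) + ((a - 2) / 2) * a + (a - 1) * d + a
      = Stmt19.TT a d (a - 3) := by
    rw [Stmt19.TT, if_pos (by omega)]
    have h1 : (a - 3) % 2 = 1 := by omega
    rw [h1]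
    have h2 : a - 2 + 1 = a - 1 := by omega
    rw [h2]
    have h3 : a / 2 - 1 = m - 1 := by omega
    have h4 : (a - 2) / 2 = m - 1 := by omega
    rw [h3, h4]
    have h5 : 1 ≤ m := by omega
    have h6 : 1 ≤ a := by omega
    have h7 : 3 ≤ a := by omega
    zify [h5, h6, h7]
    have hamz : (a : ℤ) = 2 * m := by exact_mod_cast ham
    linear_combination (-(a:ℤ) - d) * hamz
  have hTTfr : Stmt19.TT a d (a - 3) - a
      = (a + 2 * d) * (a / 2 - 1) + ((a - 2) / 2) * a + (a - 1) * d := by omega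
  -- part 1
  have part1 : IsLeast (Sp3 (a / 2 - 1) a d) (2 * (a / 2 - 1) * (a + d)) := by
    constructor
    · show a / 2 - 1 < numRep3 a d _
      rw [hl0, Stmt19.numRep3_eq]
      have := Stmt19.lower a d (a - 2) ha hae hd (by omega)
      omega
    · intro n hn
      obtain ⟨s, hs, hmod⟩ := Stmt19.class_ex a d n (by omega) hgcd
      have hTn : Stmt19.TT a d s ≤ n :=
        (Stmt19.charac a d s n ha hae hd hgcd hs hmod).mp hn
      have hmin := Stmt19.TT_min a d s ha hae hs
      have : 2 * (a / 2 - 1) * (a + d) ≤ (a - 2) * a + (a - 2) * d := by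
        have h3 : 2 * (a / 2 - 1) = a - 2 := by omega
        rw [h3, Nat.mul_add]
      omega
  -- part 2
  have part2a : (a + 2 * d) * (a / 2 - 1) + ((a - 2) / 2) * a + (a - 1) * d
      ∉ Sp3 (a / 2 - 1) a d := by
    intro hmem
    have hup := Stmt19.upper a d (a - 3) ha hae hd hgcd (by omega)
    rw [hTTfr] at hup
    have : a / 2 - 1 < numRep3 a d _ := hmem
    rw [Stmt19.numRep3_eq] at this
    omega
  have part2b : ∀ n : ℕ, n ∉ Sp3 (a / 2 - 1) a d →
      n ≤ (a + 2 * d) * (a / 2 - 1) + ((a - 2) / 2) * a + (a - 1) * d := by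
    intro n hn
    obtain ⟨s, hs, hmod⟩ := Stmt19.class_ex a d n (by omega) hgcd
    have hTn : ¬ Stmt19.TT a d s ≤ n := by
      intro h
      exact hn ((Stmt19.charac a d s n ha hae hd hgcd hs hmod).mpr h)
    push_neg at hTn
    -- n < TT s and n ≡ TT s mod a, so n ≤ TT s - a
    have hmod2 : n ≡ Stmt19.TT a d s [MOD a] := hmod.trans (Stmt19.TT_mod a d s).symm
    have hdvd : a ∣ Stmt19.TT a d s - n := (Nat.modEq_iff_dvd' hTn.le).mp hmod2
    obtain ⟨c, hc⟩ := hdvd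
    have hc1 : 1 ≤ c := by
      rcases Nat.eq_zero_or_pos c with h0 | h1
      · rw [h0, Nat.mul_zero] at hc; omega
      · exact h1
    have hac : a ≤ a * c := Nat.le_mul_of_pos_right a (by omega)
    have hnle : n + a ≤ Stmt19.TT a d s := by
      generalize a * c = P at hc hac
      omega
    have hmax := Stmt19.TT_max a d s ha hae hs
    have hfr2 : Stmt19.TT a d (a-3) = a * (a - 1) + d * (2 * a - 3) := by
      rw [Stmt19.TT, if_pos (by omega)]
      have h1 : (a - 3) % 2 = 1 := by omega
      rw [h1]
      congr 2
      · omega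
      · omega
    omega

  -- counting the gaps
  have ha0 : 0 < a := by omega
  set GapF : Finset ℕ := (Finset.range a).biUnion
      (fun s => (Finset.range (Stmt19.TT a d s / a)).image
        (fun j => Stmt19.TT a d s - (j+1)*a)) with hGapF
  have hset : {n : ℕ | n ∉ Sp3 (a / 2 - 1) a d} = ↑GapF := by
    ext n
    simp only [Set.mem_setOf_eq, Finset.coe_biUnion, Set.mem_iUnion, Finset.mem_coe,
      Finset.mem_biUnion, hGapF]
    constructor
    · intro hn
      obtain ⟨s, hs, hmod⟩ := Stmt19.class_ex a d n ha0 hgcd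
      have hTn : ¬ Stmt19.TT a d s ≤ n := by
        intro h
        exact hn ((Stmt19.charac a d s n ha hae hd hgcd hs hmod).mpr h)
      push_neg at hTn
      have hmod2 : n ≡ Stmt19.TT a d s [MOD a] := hmod.trans (Stmt19.TT_mod a d s).symm
      obtain ⟨c, hc⟩ := (Nat.modEq_iff_dvd' hTn.le).mp hmod2
      have hc1 : 1 ≤ c := by
        rcases Nat.eq_zero_or_pos c with h0 | h1
        · rw [h0, Nat.mul_zero] at hc; omega
        · exact h1
      refine ⟨s, Finset.mem_range.mpr hs, Finset.mem_image.mpr ⟨c - 1, Finset.mem_range.mpr ?_, ?_⟩⟩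
      · have hac : c * a ≤ Stmt19.TT a d s := by
          have h2 : a * c = c * a := mul_comm _ _
          generalize hP : c * a = P at *
          omega
        have := (Nat.le_div_iff_mul_le ha0).mpr hac
        omega
      · have h3 : c - 1 + 1 = c := by omega
        rw [h3]
        have h2 : a * c = c * a := mul_comm _ _
        generalize hP : c * a = P at *
        omega
    · rintro ⟨s, hs, hmem⟩
      rw [Finset.mem_range] at hs
      obtain ⟨j, hj, heq⟩ := Finset.mem_image.mp hmem
      rw [Finset.mem_range] at hj
      have hjle : (j+1)*a ≤ Stmt19.TT a d s := by
        have := (Nat.le_div_iff_mul_le ha0).mp (by omega : j + 1 ≤ Stmt19.TT a d s / a)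
        omega
      have hga : a ≤ (j+1)*a := by
        have := Nat.le_mul_of_pos_left a (show 0 < j+1 by omega)
        omega
      have hnlt : n < Stmt19.TT a d s := by
        have := Stmt19.TT_ge a d s ha
        omega
      have hnmod : n ≡ d * s [MOD a] := by
        have h1 : n ≤ Stmt19.TT a d s := hnlt.le
        have h2 : a ∣ Stmt19.TT a d s - n := ⟨j+1, by have hcomm : a*(j+1) = (j+1)*a := mul_comm _ _; omega⟩
        exact ((Nat.modEq_iff_dvd' h1).mpr h2).trans (Stmt19.TT_mod a d s)
      intro hmem'
      have := (Stmt19.charac a d s n ha hae hd hgcd hs hnmod).mp hmem'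
      omega
  have hinjgap : ∀ s, s < a → ∀ u ∈ Finset.range (Stmt19.TT a d s / a),
      ∀ v ∈ Finset.range (Stmt19.TT a d s / a),
      Stmt19.TT a d s - (u+1)*a = Stmt19.TT a d s - (v+1)*a → u = v := by
    intro s _ u hu v hv h
    rw [Finset.mem_range] at hu hv
    have hule : (u+1)*a ≤ Stmt19.TT a d s := by
      have := (Nat.le_div_iff_mul_le ha0).mp (by omega : u + 1 ≤ Stmt19.TT a d s / a); omega
    have hvle : (v+1)*a ≤ Stmt19.TT a d s := by
      have := (Nat.le_div_iff_mul_le ha0).mp (by omega : v + 1 ≤ Stmt19.TT a d s / a); omega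
    have h2 : (u+1)*a = (v+1)*a := by
      generalize hP : (u+1)*a = P at *
      generalize hQ : (v+1)*a = Q at *
      omega
    have := Nat.eq_of_mul_eq_mul_right ha0 h2
    omega
  have hcardgap : GapF.card = ∑ s ∈ Finset.range a, (Stmt19.TT a d s / a) := by
    rw [hGapF, Finset.card_biUnion]
    · refine Finset.sum_congr rfl (fun s hs => ?_)
      rw [Finset.mem_range] at hs
      rw [Finset.card_image_of_injOn (fun u hu v hv h => hinjgap s hs u hu v hv h),
        Finset.card_range]
    · intro s hs s' hs' hne
      rw [Finset.mem_coe, Finset.mem_range] at hs hs'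
      rw [Function.onFun, Finset.disjoint_left]
      rintro n hn1 hn2
      obtain ⟨j, hj, heq⟩ := Finset.mem_image.mp hn1
      obtain ⟨j', hj', heq'⟩ := Finset.mem_image.mp hn2
      rw [Finset.mem_range] at hj hj'
      have key : ∀ s'' j'', s'' < a → j'' < Stmt19.TT a d s'' / a →
          Stmt19.TT a d s'' - (j''+1)*a = n → n ≡ d * s'' [MOD a] := by
        intro s'' j'' hs'' hj'' heq''
        have hjle : (j''+1)*a ≤ Stmt19.TT a d s'' := by
          have := (Nat.le_div_iff_mul_le ha0).mp
            (by omega : j'' + 1 ≤ Stmt19.TT a d s'' / a); omega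
        have h1 : n ≤ Stmt19.TT a d s'' := by omega
        have h2 : a ∣ Stmt19.TT a d s'' - n := ⟨j''+1, by have hcomm : a*(j''+1) = (j''+1)*a := mul_comm _ _; omega⟩
        exact ((Nat.modEq_iff_dvd' h1).mpr h2).trans (Stmt19.TT_mod a d s'')
      have hm1 := key s j hs hj heq
      have hm2 := key s' j' hs' hj' heq'
      have hds : d * s ≡ d * s' [MOD a] := hm1.symm.trans hm2
      have hss : s ≡ s' [MOD a] := Nat.ModEq.cancel_left_of_coprime hgcd hds
      have h3 : s % a = s' % a := hss
      rw [Nat.mod_eq_of_lt hs, Nat.mod_eq_of_lt hs'] at h3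
      exact hne h3
  set NG := ∑ s ∈ Finset.range a, (Stmt19.TT a d s / a) with hNGdef
  have hncard : Set.ncard {n : ℕ | n ∉ Sp3 (a / 2 - 1) a d} = NG := by
    rw [hset, Set.ncard_coe_finset, hcardgap]
  -- evaluate the sum
  have hptw : ∀ s ∈ Finset.range a, Stmt19.TT a d s = a * (Stmt19.TT a d s / a) + d * s % a := by
    intro s _
    have h1 : Stmt19.TT a d s % a = d * s % a := Stmt19.TT_mod a d s
    have h2 := Nat.div_add_mod (Stmt19.TT a d s) a
    omega
  have hNGkey : ∑ s ∈ Finset.range a, Stmt19.TT a d s = a * NG + ∑ s ∈ Finset.range a, s := by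
    calc ∑ s ∈ Finset.range a, Stmt19.TT a d s
        = ∑ s ∈ Finset.range a, (a * (Stmt19.TT a d s / a) + d * s % a) :=
          Finset.sum_congr rfl hptw
      _ = (∑ s ∈ Finset.range a, a * (Stmt19.TT a d s / a))
          + ∑ s ∈ Finset.range a, (d * s % a) := Finset.sum_add_distrib
      _ = a * NG + ∑ s ∈ Finset.range a, s := by
          rw [← Finset.mul_sum, Stmt19.residue_sum a d ha0 hgcd]
  have hGauss : (∑ s ∈ Finset.range a, s) * 2 = a * (a-1) := Finset.sum_range_id_mul_two a
  have hTTs := Stmt19.TT_sum a d ha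
  set S := ∑ s ∈ Finset.range a, s with hSdef
  -- the master equation
  have hE : 2*(a*NG) + a*(a-1)
      = 2*(a*(a*(a-2))) + (a*(a-1))*d + 2*((a-2)*(d*a)) + 2*(a*(a/2)) := by
    have e1 : a * NG + S = a*(a*(a-2)) + (d*S + (a-2)*(d*a)) + a*(a/2) := by
      rw [← hNGkey, hTTs]
    have e2 : (a*(a-1))*d = d*S*2 := by
      rw [← hGauss]; ring
    omega
  -- final arithmetic
  have hm' : a / 2 = m := by omega
  have ht1 : t ≤ 2*m*t := by
    have := Nat.le_mul_of_pos_left t (show 0 < 2*m by omega)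
    omega
  have h4eq : (a-1)*(a+2*d-1)+1 = 4*(m*m + 2*m*t - t) := by
    have ha1 : a - 1 = 2*m - 1 := by omega
    have ha2 : a + 2*d - 1 = 2*m + 4*t + 1 := by omega
    rw [ha1, ha2]
    have hl : 1 ≤ 2*m := by omega
    have ht2 : t ≤ m*m + 2*m*t := by omega
    zify [hl, ht2]
    ring
  have hdiv4 : ((a-1)*(a+2*d-1)+1)/4 = m*m + 2*m*t - t := by
    rw [h4eq]; exact Nat.mul_div_cancel_left _ (by norm_num)
  have hco : 2*a + 2*d - 1 - (a/2 - 1) = 3*m + 4*t + 2 := by omega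
  have hNGval : NG = (3*m + 4*t + 2) * (m - 1) + (m*m + 2*m*t - t) := by
    have hcancel : (2*a) * NG = (2*a) * ((3*m + 4*t + 2) * (m - 1) + (m*m + 2*m*t - t)) := by
      have hamz : (a:ℤ) = 2*m := by exact_mod_cast ham
      have hdtz : (d:ℤ) = 2*t+1 := by exact_mod_cast hdt
      have h1m : 1 ≤ m := by omega
      have h1a : 1 ≤ a := by omega
      have h2a : 2 ≤ a := by omega
      rw [hm'] at hE
      have ht2 : t ≤ m*m + 2*m*t := by omega
      zify [h1m, h1a, h2a, ht2] at hE ⊢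
      rw [hamz] at hE ⊢
      rw [hdtz] at hE
      linear_combination hE
    exact Nat.eq_of_mul_eq_mul_left (by omega : 0 < 2*a) hcancel
  refine ⟨part1, ⟨part2a, part2b⟩, ?_, ?_⟩
  · rw [hncard, hNGval, hco, hdiv4, hp]
  · rw [hncard, hNGval]
    have hq1 : a / 2 - 1 = m - 1 := hp
    have hq2 : (a-2)/2 = m - 1 := by omega
    have hq3 : a - 1 = 2*m - 1 := by omega
    rw [hq1, hq2, hq3]
    have hamz : (a:ℤ) = 2*m := by exact_mod_cast ham
    have hdtz : (d:ℤ) = 2*t+1 := by exact_mod_cast hdt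
    have h1m : 1 ≤ m := by omega
    have h1m2 : 1 ≤ 2*m := by omega
    have ht2 : t ≤ m*m + 2*m*t := by omega
    zify [h1m, h1m2, ht2]
    rw [hamz, hdtz]
    ring
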